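/- Let J be a compact subset of ℝ \ {0}, f continuous on [0,1], and φ(y,α) := -2α/(1-y)^2 + 2α/(1-y) - (2/α)·log(1-y). Define ψ(y,α) := (e^{iφ(y,α)}/(1-y)) · ∫_y^1 e^{-iφ(x,α)} f(x) dx for (y,α) in [0,1)×J. Then ψ extends to a continuous function on [0,1]×J, with ψ(1,α) = 0. -/

import Mathlib

set_option maxHeartbeats 1000000

open Complex

noncomputable def phase (y α : ℝ) : ℝ :=
  -2 * α / (1 - y) ^ 2 + 2 * α / (1 - y) - 2 / α * Real.log (1 - y)

noncomputable def phaseD (x α : ℝ) : ℝ :=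
  -(4*α)/(1-x)^3 + 2*α/(1-x)^2 + 2/(α*(1-x))

noncomputable def phaseDD (x α : ℝ) : ℝ :=
  -(12*α)/(1-x)^4 + 4*α/(1-x)^3 + 2/(α*(1-x)^2)

open intervalIntegral MeasureTheory Set

lemma phase_one (α : ℝ) : phase 1 α = 0 := by simp [phase]


lemma one_sub_ne {x : ℝ} (hx : x < 1) : (1:ℝ) - x ≠ 0 := ne_of_gt (by linarith)


lemma hasDerivAt_one_sub (x : ℝ) : HasDerivAt (fun t : ℝ => 1 - t) (-1) x := by
  simpa using (hasDerivAt_id x).const_sub 1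


lemma hasDerivAt_phase {α x : ℝ} (hα : α ≠ 0) (hx : x < 1) :
    HasDerivAt (fun t => phase t α) (phaseD x α) x := by
  have h1 : (1:ℝ) - x ≠ 0 := one_sub_ne hx
  have hx1 := hasDerivAt_one_sub x
  have hA := (hasDerivAt_const x (-2*α)).div (hx1.pow 2) (pow_ne_zero 2 h1)
  have hB := (hasDerivAt_const x (2*α)).div hx1 h1
  have hL := ((Real.hasDerivAt_log h1).comp x hx1).const_mul (2/α)
  have h := (hA.add hB).sub hL
  have hfn : (fun t => phase t α) =
      (fun t => -2*α/(1-t)^2 + 2*α/(1-t) - 2/α * Real.log (1-t)) := by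
    funext t; simp [phase]
  rw [hfn]
  refine h.congr_deriv ?_
  simp only [Pi.pow_apply, Pi.mul_apply, phaseD]
  field_simp [phaseD]
  ring


lemma hasDerivAt_phaseD {α x : ℝ} (hα : α ≠ 0) (hx : x < 1) :
    HasDerivAt (fun t => phaseD t α) (phaseDD x α) x := by
  have h1 : (1:ℝ) - x ≠ 0 := one_sub_ne hx
  have hx1 := hasDerivAt_one_sub x
  have hA := (hasDerivAt_const x (-(4*α))).div (hx1.pow 3) (pow_ne_zero 3 h1)
  have hB := (hasDerivAt_const x (2*α)).div (hx1.pow 2) (pow_ne_zero 2 h1)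
  have hC := (hasDerivAt_const x 2).div ((hasDerivAt_const x α).mul hx1)
    (mul_ne_zero hα h1)
  have h := (hA.add hB).add hC
  have hfn : (fun t => phaseD t α) =
      (fun t => -(4*α)/(1-t)^3 + 2*α/(1-t)^2 + 2/(α*(1-t))) := by
    funext t; simp [phaseD]
  rw [hfn]
  refine h.congr_deriv ?_
  simp only [Pi.pow_apply, Pi.mul_apply, phaseDD]
  field_simp [phaseDD]
  ring


lemma abs_phaseD_ge {m α x : ℝ} (hm : 0 < m) (hmα : m ≤ |α|)
    (hx1 : 1 - min (1/2) (m/2) ≤ x) (hx2 : x < 1) :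
    2*m/(1-x)^3 ≤ |phaseD x α| := by
  have hs0 : 0 < 1 - x := by linarith
  set s := 1 - x with hsdef
  have hs12 : s ≤ 1/2 := by
    have := min_le_left (1/2 : ℝ) (m/2); simp only [hsdef]; linarith
  have hsm : s ≤ m/2 := by
    have := min_le_right (1/2 : ℝ) (m/2); simp only [hsdef]; linarith
  have ha : 0 < |α| := lt_of_lt_of_le hm hmα
  set a := |α| with hadef
  have habs : |phaseD x α| ≥ |(-(4*α))/s^3| - |2*α/s^2 + 2/(α*s)| := by
    have hsplit : phaseD x α = (-(4*α))/s^3 + (2*α/s^2 + 2/(α*s)) := by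
      simp only [phaseD]; ring
    rw [hsplit]
    have := abs_add_le ((-(4*α))/s^3 + (2*α/s^2 + 2/(α*s))) (-(2*α/s^2 + 2/(α*s)))
    simp only [add_neg_cancel_right, abs_neg] at this
    linarith
  have habsp : ∀ k : ℕ, |s^k| = s^k := fun k => abs_of_pos (pow_pos hs0 k)
  have e1 : |(-(4*α))/s^3| = 4*a/s^3 := by
    rw [abs_div, abs_neg, abs_mul, habsp]
    norm_num
    rw [hadef]
  have e2 : |2*α/s^2 + 2/(α*s)| ≤ 2*a/s^2 + 2/(a*s) := by
    refine (abs_add_le _ _).trans ?_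
    rw [abs_div, abs_div, abs_mul, abs_mul, habsp, abs_of_pos hs0]
    norm_num
    simp [hadef]
  have expand : 4*a/s^3 - 2*a/s^2 - 2/(a*s) - 2*m/s^3
      = (4*a^2 - 2*a^2*s - 2*s^2 - 2*m*a)/(a*s^3) := by
    field_simp
  have num : 0 ≤ 4*a^2 - 2*a^2*s - 2*s^2 - 2*m*a := by
    nlinarith [mul_le_mul_of_nonneg_left hs12 (le_of_lt (mul_pos ha ha)),
      mul_le_mul_of_nonneg_right hsm hs0.le, mul_le_mul_of_nonneg_left hmα hm.le,
      sq_nonneg (a - m)]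
  have hden : 0 < a*s^3 := by positivity
  have : 0 ≤ 4*a/s^3 - 2*a/s^2 - 2/(a*s) - 2*m/s^3 := by
    rw [expand]; positivity
  linarith [habs, e1, e2]


lemma abs_phaseDD_le {m Mb α x : ℝ} (hm : 0 < m) (hmα : m ≤ |α|) (hαM : |α| ≤ Mb)
    (hx0 : 0 ≤ x) (hx2 : x < 1) :
    |phaseDD x α| ≤ (16*Mb + 2/m)/(1-x)^4 := by
  have hs0 : 0 < 1 - x := by linarith
  set s := 1 - x with hsdef
  have hs1 : s ≤ 1 := by simp only [hsdef]; linarith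
  have ha : 0 < |α| := lt_of_lt_of_le hm hmα
  set a := |α| with hadef
  have hMb : 0 < Mb := lt_of_lt_of_le ha hαM
  have habsp' : ∀ k : ℕ, |(1-x)^k| = s^k := fun k => abs_of_pos (pow_pos hs0 k)
  have tri : |phaseDD x α| ≤ 12*a/s^4 + 4*a/s^3 + 2/(a*s^2) := by
    simp only [phaseDD]
    refine (abs_add_le _ _).trans ?_
    gcongr
    · refine (abs_add_le _ _).trans ?_
      gcongr
      · rw [abs_div, abs_neg, abs_mul, habsp']; norm_num; simp [hadef]
      · rw [abs_div, abs_mul, habsp']; norm_num; simp [hadef]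
    · rw [abs_div, abs_mul, habsp']; norm_num; simp [hadef]
  have b1 : 12*a/s^4 ≤ 12*Mb/s^4 := by gcongr
  have b2 : 4*a/s^3 ≤ 4*Mb/s^4 := by
    rw [div_le_div_iff₀ (by positivity) (by positivity)]
    nlinarith [pow_pos hs0 3, pow_pos hs0 4, mul_le_mul_of_nonneg_right hαM (pow_pos hs0 3).le,
      pow_le_pow_of_le_one hs0.le hs1 (show 3 ≤ 4 by norm_num)]
  have b3 : 2/(a*s^2) ≤ (2/m)/s^4 := by
    have h1 : 2/(a*s^2) ≤ 2/(m*s^2) := by gcongr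
    have h2 : 2/(m*s^2) ≤ 2/(m*s^4) := by
      rw [div_le_div_iff₀ (by positivity) (by positivity)]
      nlinarith [pow_le_pow_of_le_one hs0.le hs1 (show 2 ≤ 4 by norm_num),
        mul_pos hm (pow_pos hs0 2)]
    have h3 : (2/m)/s^4 = 2/(m*s^4) := by field_simp
    linarith
  have : (16*Mb + 2/m)/s^4 = 12*Mb/s^4 + 4*Mb/s^4 + (2/m)/s^4 := by ring
  linarith


lemma norm_exp_neg_I_mul (r : ℝ) : ‖Complex.exp (-Complex.I * (r:ℂ))‖ = 1 := by
  rw [Complex.norm_exp]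
  simp


lemma norm_exp_I_mul (r : ℝ) : ‖Complex.exp (Complex.I * (r:ℂ))‖ = 1 := by
  rw [Complex.norm_exp]
  simp


lemma continuousAt_phase {y α : ℝ} (hy : y ≠ 1) (hα : α ≠ 0) :
    ContinuousAt (fun p : ℝ × ℝ => phase p.1 p.2) (y, α) := by
  have h1 : (1:ℝ) - y ≠ 0 := fun h => hy (by linarith)
  unfold phase
  apply ContinuousAt.sub
  apply ContinuousAt.add
  · exact ContinuousAt.div (by fun_prop) (by fun_prop) (pow_ne_zero 2 h1)
  · exact ContinuousAt.div (by fun_prop) (by fun_prop) h1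
  · refine ContinuousAt.mul (ContinuousAt.div (by fun_prop) (by fun_prop) hα) ?_
    have hin : ContinuousAt (fun p : ℝ × ℝ => 1 - p.1) (y, α) := by fun_prop
    exact ContinuousAt.comp (x := ((y, α) : ℝ × ℝ)) (f := fun p : ℝ × ℝ => 1 - p.1)
      (Real.continuousAt_log h1) hin


lemma measurable_phase (α : ℝ) : Measurable (fun x => phase x α) := by
  unfold phase
  apply Measurable.sub
  apply Measurable.add
  · exact measurable_const.div (((measurable_const.sub measurable_id).pow measurable_const))
  · exact measurable_const.div (measurable_const.sub measurable_id)
  · exact measurable_const.mul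
      (Real.measurable_log.comp (measurable_const.sub measurable_id))


lemma measurable_e_mul {α : ℝ} {g : ℝ → ℂ} (hg : Measurable g) :
    Measurable (fun x => Complex.exp (-Complex.I * (phase x α : ℂ)) * g x) := by
  apply Measurable.mul _ hg
  exact (measurable_const.mul
    (Complex.measurable_ofReal.comp (measurable_phase α))).cexp


lemma intervalIntegrable_e_mul {α a c C : ℝ} {g : ℝ → ℂ} (hg : Measurable g)
    (hgb : ∀ x, ‖g x‖ ≤ C) :
    IntervalIntegrable (fun x => Complex.exp (-Complex.I * (phase x α : ℂ)) * g x)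
      MeasureTheory.volume a c := by
  rw [intervalIntegrable_iff]
  refine MeasureTheory.Integrable.mono' (g := fun _ => C)
    ?_ ((measurable_e_mul hg).aestronglyMeasurable) ?_
  · refine MeasureTheory.integrableOn_const ?_
    rw [Set.uIoc]
    exact measure_Ioc_lt_top.ne
  · filter_upwards with x
    rw [norm_mul, norm_exp_neg_I_mul, one_mul]
    exact hgb x


lemma intervalIntegrable_e (α a c : ℝ) :
    IntervalIntegrable (fun x => Complex.exp (-Complex.I * (phase x α : ℂ)))
      MeasureTheory.volume a c := by
  have h := intervalIntegrable_e_mul (α := α) (a := a) (c := c) (C := 1)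
    (g := fun _ => (1:ℂ)) measurable_const (by intro x; norm_num)
  simpa using h

lemma osc_bound {m Mb α : ℝ} (hm : 0 < m) (hmα : m ≤ |α|) (hαM : |α| ≤ Mb) {y b : ℝ}
    (hy0 : 0 ≤ y) (hys : 1 - min (1/2) (m/2) ≤ y) (hyb : y ≤ b) (hb : b < 1) :
    ‖∫ x in y..b, Complex.exp (-Complex.I * (phase x α : ℂ))‖ ≤
      (1/m + (16*Mb + 2/m)/(12*m^2)) * (1-y)^3 := by
  have hα : α ≠ 0 := by
    intro h; rw [h, abs_zero] at hmα; linarith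
  have hy1 : y < 1 := lt_of_le_of_lt hyb hb
  have hMb : 0 < Mb := lt_of_lt_of_le (lt_of_lt_of_le hm hmα) hαM
  set K := 16*Mb + 2/m with hK
  have hK0 : 0 < K := by positivity
  have hIcc : Set.uIcc y b = Set.Icc y b := Set.uIcc_of_le hyb
  -- facts for x in [y,b]
  have hx1 : ∀ x ∈ Set.Icc y b, x < 1 := fun x hx => lt_of_le_of_lt hx.2 hb
  have hxs : ∀ x ∈ Set.Icc y b, 1 - min (1/2) (m/2) ≤ x := fun x hx => le_trans hys hx.1
  have hx0 : ∀ x ∈ Set.Icc y b, 0 ≤ x := fun x hx => le_trans hy0 hx.1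
  have hdlow : ∀ x ∈ Set.Icc y b, 2*m/(1-x)^3 ≤ |phaseD x α| :=
    fun x hx => abs_phaseD_ge hm hmα (hxs x hx) (hx1 x hx)
  have hdne : ∀ x ∈ Set.Icc y b, phaseD x α ≠ 0 := by
    intro x hx
    have h1 : 0 < 2*m/(1-x)^3 :=
      div_pos (by linarith) (pow_pos (by linarith [hx1 x hx]) 3)
    have := hdlow x hx
    intro h; rw [h, abs_zero] at this; linarith
  set w : ℝ → ℂ := fun t => Complex.exp (-Complex.I * (phase t α : ℂ)) with hw
  set u : ℝ → ℂ := fun t => Complex.I / (phaseD t α : ℂ) with hu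
  set w' : ℝ → ℂ := fun t => -Complex.I * (phaseD t α : ℂ) * w t with hw'
  set u' : ℝ → ℂ := fun t => -Complex.I * (phaseDD t α : ℂ) / (phaseD t α : ℂ)^2 with hu'
  have hwderiv : ∀ x ∈ Set.uIcc y b, HasDerivAt w (w' x) x := by
    intro x hx
    rw [hIcc] at hx
    have h := (((hasDerivAt_phase hα (hx1 x hx)).ofReal_comp).const_mul
      (-Complex.I)).cexp
    convert h using 1
    simp only [hw', hw]; ring
  have huderiv : ∀ x ∈ Set.uIcc y b, HasDerivAt u (u' x) x := by
    intro x hx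
    rw [hIcc] at hx
    have hd := (hasDerivAt_phaseD hα (hx1 x hx)).ofReal_comp
    have h := (hasDerivAt_const x Complex.I).div hd
      (Complex.ofReal_ne_zero.mpr (hdne x hx))
    refine h.congr_deriv ?_
    simp only [hu']; ring
  have hcw : ContinuousOn w (Set.Icc y b) := by
    intro x hx
    exact ((hwderiv x (hIcc ▸ hx)).continuousAt).continuousWithinAt
  have hcd : ContinuousOn (fun t => (phaseD t α : ℂ)) (Set.Icc y b) := by
    intro x hx
    exact (Complex.continuous_ofReal.continuousAt.comp
      ((hasDerivAt_phaseD hα (hx1 x hx)).continuousAt)).continuousWithinAt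
  have hcdd : ContinuousOn (fun t => (phaseDD t α : ℂ)) (Set.Icc y b) := by
    intro x hx
    have h1 : (1:ℝ) - x ≠ 0 := one_sub_ne (hx1 x hx)
    have : ContinuousAt (fun t : ℝ => phaseDD t α) x := by
      unfold phaseDD
      apply ContinuousAt.add
      apply ContinuousAt.add
      · exact ContinuousAt.div (by fun_prop) (by fun_prop) (pow_ne_zero 4 h1)
      · exact ContinuousAt.div (by fun_prop) (by fun_prop) (pow_ne_zero 3 h1)
      · exact ContinuousAt.div (by fun_prop) (by fun_prop)
          (mul_ne_zero hα (pow_ne_zero 2 h1))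
    exact (Complex.continuous_ofReal.continuousAt.comp this).continuousWithinAt
  have hIw' : IntervalIntegrable w' MeasureTheory.volume y b := by
    apply ContinuousOn.intervalIntegrable
    rw [hIcc]
    exact (continuousOn_const.mul hcd).mul hcw
  have hIu' : IntervalIntegrable u' MeasureTheory.volume y b := by
    apply ContinuousOn.intervalIntegrable
    rw [hIcc]
    exact ((continuousOn_const.mul hcdd).div (hcd.pow 2)
      (fun x hx => pow_ne_zero 2 (Complex.ofReal_ne_zero.mpr (hdne x hx))))
  have ibp := intervalIntegral.integral_mul_deriv_eq_deriv_mul huderiv hwderiv hIu' hIw'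
  -- ∫ u * w' = u b * w b - u y * w y - ∫ u' * w
  have congr1 : (∫ x in y..b, w x) = ∫ x in y..b, u x * w' x := by
    apply intervalIntegral.integral_congr
    intro x hx
    rw [hIcc] at hx
    have hdcne : (phaseD x α : ℂ) ≠ 0 := Complex.ofReal_ne_zero.mpr (hdne x hx)
    have key : u x * w' x = w x := by
      simp only [hu, hw']
      rw [div_mul_eq_mul_div, div_eq_iff hdcne]
      calc Complex.I * (-Complex.I * (phaseD x α:ℂ) * w x)
          = -(Complex.I*Complex.I) * ((phaseD x α:ℂ) * w x) := by ring
        _ = (phaseD x α:ℂ) * w x := by rw [Complex.I_mul_I]; ring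
        _ = w x * (phaseD x α:ℂ) := by ring
    exact key.symm
  -- norms
  have hnormw : ∀ x, ‖w x‖ = 1 := fun x => norm_exp_neg_I_mul _
  have hnormu : ∀ x ∈ Set.Icc y b, ‖u x‖ ≤ (1-x)^3/(2*m) := by
    intro x hx
    have hxl := hx1 x hx
    have hpos : 0 < 2*m/(1-x)^3 := div_pos (by linarith) (pow_pos (by linarith) 3)
    have : ‖u x‖ = 1/|phaseD x α| := by
      simp only [hu]
      rw [norm_div, Complex.norm_I, Complex.norm_real, Real.norm_eq_abs]
    rw [this]
    calc 1/|phaseD x α| ≤ 1/(2*m/(1-x)^3) :=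
          one_div_le_one_div_of_le hpos (hdlow x hx)
      _ = (1-x)^3/(2*m) := by rw [one_div_div]
  have hnormu' : ∀ x ∈ Set.Icc y b, ‖u' x * w x‖ ≤ K/(4*m^2)*(1-x)^2 := by
    intro x hx
    have hxl := hx1 x hx
    have hs0 : (0:ℝ) < 1 - x := by linarith
    have hdd := abs_phaseDD_le hm hmα hαM (hx0 x hx) hxl
    have hdl := hdlow x hx
    have hpos : 0 < 2*m/(1-x)^3 := div_pos (by linarith) (pow_pos (by linarith) 3)
    have h1 : ‖u' x * w x‖ = |phaseDD x α| / |phaseD x α|^2 := by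
      rw [norm_mul, hnormw, mul_one]
      simp only [hu']
      rw [norm_div, norm_mul, norm_neg, Complex.norm_I, one_mul, norm_pow,
        Complex.norm_real, Complex.norm_real, Real.norm_eq_abs, Real.norm_eq_abs]
    rw [h1]
    have h2 : |phaseDD x α| / |phaseD x α|^2 ≤ (K/(1-x)^4)/((2*m/(1-x)^3)^2) := by
      apply div_le_div₀ (by positivity) hdd (by positivity)
      exact pow_le_pow_left₀ hpos.le hdl 2
    have heq : (K/(1-x)^4)/((2*m/(1-x)^3)^2) = K/(4*m^2)*(1-x)^2 := by
      field_simp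
      ring
    linarith
  -- the weight integral
  set c : ℝ := K/(4*m^2) with hc
  have hc0 : 0 < c := by positivity
  have hFder : ∀ t ∈ Set.uIcc y b, HasDerivAt (fun t => -(c/3) * (1-t)^3) (c*(1-t)^2) t := by
    intro t _
    have h := ((hasDerivAt_one_sub t).pow 3).const_mul (-(c/3))
    refine h.congr_deriv ?_
    push_cast
    ring
  have hInt : IntervalIntegrable (fun t => c*(1-t)^2) MeasureTheory.volume y b :=
    Continuous.intervalIntegrable
      (continuous_const.mul ((continuous_const.sub continuous_id).pow 2)) y b
  have hval := intervalIntegral.integral_eq_sub_of_hasDerivAt hFder hInt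
  have hble : (1-b)^3 ≤ (1-y)^3 := by
    apply pow_le_pow_left₀ (by linarith) (by linarith)
  have h3b : (0:ℝ) ≤ (1-b)^3 := pow_nonneg (by linarith) 3
  have habsval : |∫ t in y..b, c*(1-t)^2| ≤ c/3 * (1-y)^3 := by
    rw [hval]
    have hrew : -(c/3) * (1-b)^3 - -(c/3)*(1-y)^3 = c/3 * ((1-y)^3 - (1-b)^3) := by ring
    rw [hrew, _root_.abs_of_nonneg (by nlinarith : (0:ℝ) ≤ c/3 * ((1-y)^3 - (1-b)^3))]
    nlinarith
  have hintbound : ‖∫ x in y..b, u' x * w x‖ ≤ c/3 * (1-y)^3 := by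
    refine le_trans (intervalIntegral.norm_integral_le_abs_of_norm_le ?_ hInt) habsval
    refine ((MeasureTheory.ae_restrict_mem measurableSet_uIoc).mono ?_)
    intro x hxx
    have : x ∈ Set.Icc y b := by
      rw [Set.uIoc_of_le hyb] at hxx
      exact Set.Ioc_subset_Icc_self hxx
    exact hnormu' x this
  -- combine
  rw [congr1, ibp]
  have hy3 : (0:ℝ) ≤ (1-y)^3 := pow_nonneg (by linarith) 3
  have humem : y ∈ Set.Icc y b := ⟨le_refl y, hyb⟩
  have hbmem : b ∈ Set.Icc y b := ⟨hyb, le_refl b⟩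
  have n1 : ‖u b * w b‖ ≤ (1-b)^3/(2*m) := by
    rw [norm_mul, hnormw, mul_one]; exact hnormu b hbmem
  have n2 : ‖u y * w y‖ ≤ (1-y)^3/(2*m) := by
    rw [norm_mul, hnormw, mul_one]; exact hnormu y humem
  calc ‖u b * w b - u y * w y - ∫ x in y..b, u' x * w x‖
      ≤ ‖u b * w b - u y * w y‖ + ‖∫ x in y..b, u' x * w x‖ := norm_sub_le _ _
    _ ≤ (‖u b * w b‖ + ‖u y * w y‖) + ‖∫ x in y..b, u' x * w x‖ := by
        gcongr; exact norm_sub_le _ _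
    _ ≤ ((1-b)^3/(2*m) + (1-y)^3/(2*m)) + c/3 * (1-y)^3 := by
        gcongr
    _ ≤ (1/m + K/(12*m^2)) * (1-y)^3 := by
        rw [hc]
        have : K/(4*m^2)/3 = K/(12*m^2) := by ring
        rw [this]
        have h1 : (1-b)^3/(2*m) ≤ (1-y)^3/(2*m) := by gcongr
        have h2 : (1-y)^3/(2*m) + (1-y)^3/(2*m) = (1/m) * (1-y)^3 := by ring
        nlinarith [mul_le_mul_of_nonneg_right (le_refl (K/(12*m^2))) hy3]


open intervalIntegral MeasureTheory Set in
theorem oscillatory_extension (J : Set ℝ) (hJ : IsCompact J) (hJ0 : (0 : ℝ) ∉ J)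
    (f : ℝ → ℂ) (hf : ContinuousOn f (Set.Icc 0 1)) :
    ∃ Ψ : ℝ × ℝ → ℂ, ContinuousOn Ψ (Set.Icc 0 1 ×ˢ J) ∧
      (∀ y ∈ Set.Ico (0 : ℝ) 1, ∀ α ∈ J,
        Ψ (y, α) = Complex.exp (Complex.I * (phase y α : ℂ)) / (1 - y) *
          ∫ x in y..1, Complex.exp (-Complex.I * (phase x α : ℂ)) * f x) ∧
      ∀ α ∈ J, Ψ (1, α) = 0 := by
  classical
  set f' : ℝ → ℂ := fun x => f (max 0 (min 1 x)) with hf'def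
  have hproj : ∀ x : ℝ, max 0 (min 1 x) ∈ Set.Icc (0:ℝ) 1 := by
    intro x
    exact ⟨le_max_left _ _, max_le (by norm_num) (min_le_left _ _)⟩
  have hf'cont : Continuous f' :=
    hf.comp_continuous (by fun_prop) hproj
  have hf'eq : ∀ x ∈ Set.Icc (0:ℝ) 1, f' x = f x := by
    intro x hx
    simp only [hf'def]
    rw [min_eq_right hx.2, max_eq_right hx.1]
  obtain ⟨B, hB⟩ := isCompact_Icc.exists_bound_of_continuousOn hf
  have hB' : ∀ x, ‖f' x‖ ≤ B := fun x => hB _ (hproj x)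
  have hB0 : 0 ≤ B := le_trans (norm_nonneg _) (hB' 0)
  have hmf' : Measurable f' := hf'cont.measurable
  set Ψ : ℝ × ℝ → ℂ := fun p =>
    Complex.exp (Complex.I * (phase p.1 p.2 : ℂ)) / (1 - (p.1 : ℂ)) *
      ∫ x in p.1..1, Complex.exp (-Complex.I * (phase x p.2 : ℂ)) * f' x with hΨdef
  have hΨ1 : ∀ α : ℝ, Ψ (1, α) = 0 := by
    intro α
    simp only [hΨdef]
    norm_num
  refine ⟨Ψ, ?_, ?_, fun α _ => hΨ1 α⟩
  · -- continuity
    rintro ⟨y₀, α₀⟩ ⟨hy₀, hα₀J⟩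
    simp only [Set.mem_Icc] at hy₀
    have hα₀ : α₀ ≠ 0 := fun h => hJ0 (h ▸ hα₀J)
    rcases eq_or_lt_of_le hy₀.2 with heq | hlt
    · -- boundary case y₀ = 1
      subst heq
      rw [Metric.continuousWithinAt_iff]
      intro ε hε
      have habs0 : 0 < |α₀| := abs_pos.mpr hα₀
      set m : ℝ := |α₀|/2 with hmdef
      have hm : 0 < m := by simp only [hmdef]; linarith
      set Mb : ℝ := |α₀| + m with hMbdef
      have hMb0 : 0 < Mb := by simp only [hMbdef]; linarith
      set C : ℝ := 1/m + (16*Mb + 2/m)/(12*m^2) with hCdef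
      have hC0 : 0 < C := by simp only [hCdef]; positivity
      obtain ⟨δ₁, hδ₁0, hδ₁⟩ :=
        Metric.continuousAt_iff.mp (hf'cont.continuousAt (x := 1)) (ε/2) (by linarith)
      set Q : ℝ := B * (C+1) with hQdef
      have hQ0 : 0 ≤ Q := mul_nonneg hB0 (by linarith)
      set δ₂ : ℝ := Real.sqrt (ε/(2*(Q+1))) with hδ₂def
      have hδ₂0 : 0 < δ₂ := Real.sqrt_pos.mpr (by positivity)
      have hδ₂sq : δ₂^2 = ε/(2*(Q+1)) := Real.sq_sqrt (by positivity)
      set δ : ℝ := min δ₁ (min δ₂ (min m (min (1/2) (m/2)))) with hδdef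
      have hδ0 : 0 < δ := by
        simp only [hδdef, lt_min_iff]
        refine ⟨hδ₁0, hδ₂0, hm, by norm_num, by linarith⟩
      have hδle1 : δ ≤ δ₁ := min_le_left _ _
      have hδle2 : δ ≤ δ₂ := le_trans (min_le_right _ _) (min_le_left _ _)
      have hδlem : δ ≤ m :=
        le_trans (min_le_right _ _) (le_trans (min_le_right _ _) (min_le_left _ _))
      have hδles : δ ≤ min (1/2) (m/2) :=
        le_trans (min_le_right _ _) (le_trans (min_le_right _ _) (min_le_right _ _))
      refine ⟨δ, hδ0, ?_⟩
      intro p hpmem hpdist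
      obtain ⟨y, α⟩ := p
      obtain ⟨hyI', hαJ⟩ := hpmem
      simp only [Set.mem_Icc] at hyI'
      rw [hΨ1 α₀, dist_zero_right]
      rw [Prod.dist_eq, max_lt_iff] at hpdist
      obtain ⟨hdy, hdα⟩ := hpdist
      rw [Real.dist_eq] at hdy hdα
      by_cases hy1 : y = 1
      · subst hy1
        rw [hΨ1 α]
        simpa using hε
      have hylt : y < 1 := lt_of_le_of_ne hyI'.2 hy1
      have h1y : 0 < 1 - y := by linarith
      have h1yδ : 1 - y < δ := by
        rw [abs_of_nonpos (by linarith : y - 1 ≤ 0)] at hdy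
        linarith
      have hmα : m ≤ |α| := by
        have h := abs_sub_abs_le_abs_sub α₀ α
        rw [abs_sub_comm] at h
        simp only [hmdef]
        have : |α - α₀| < m := lt_of_lt_of_le hdα hδlem
        simp only [hmdef] at this
        linarith
      have hαM : |α| ≤ Mb := by
        have h := abs_sub_abs_le_abs_sub α α₀
        simp only [hMbdef]
        have : |α - α₀| < m := lt_of_lt_of_le hdα hδlem
        linarith
      have hys : 1 - min (1/2) (m/2) ≤ y := by
        have := lt_of_lt_of_le h1yδ hδles
        linarith
      set b' : ℝ := 1 - (1-y)^3 with hb'def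
      have h3pos : 0 < (1-y)^3 := pow_pos h1y 3
      have hyb' : y ≤ b' := by
        simp only [hb'def]
        nlinarith [sq_nonneg (1-y)]
      have hb'1 : b' < 1 := by simp only [hb'def]; linarith
      set cc : ℂ := f' 1 with hccdef
      have hint1 : IntervalIntegrable
          (fun x => Complex.exp (-Complex.I * (phase x α : ℂ)) * (f' x - cc))
          MeasureTheory.volume y 1 :=
        intervalIntegrable_e_mul (hmf'.sub measurable_const)
          (C := B + B) (fun x => le_trans (norm_sub_le _ _) (by
            have := hB' x; have := hB' 1; simp only [hccdef]; linarith))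
      have hint2 : IntervalIntegrable
          (fun x => Complex.exp (-Complex.I * (phase x α : ℂ)) * cc)
          MeasureTheory.volume y 1 :=
        intervalIntegrable_e_mul measurable_const (C := ‖cc‖) (fun _ => le_refl _)
      have hsplit : (∫ x in y..1, Complex.exp (-Complex.I * (phase x α : ℂ)) * f' x)
          = (∫ x in y..1, Complex.exp (-Complex.I * (phase x α : ℂ)) * (f' x - cc))
            + (∫ x in y..1, Complex.exp (-Complex.I * (phase x α : ℂ))) * cc := by
        rw [← intervalIntegral.integral_mul_const]
        rw [← intervalIntegral.integral_add hint1 hint2]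
        apply intervalIntegral.integral_congr
        intro x _
        dsimp only
        ring
      have hT1 : ‖∫ x in y..1, Complex.exp (-Complex.I * (phase x α : ℂ)) * (f' x - cc)‖
          ≤ ε/2 * |1 - y| := by
        apply intervalIntegral.norm_integral_le_of_norm_le_const
        intro x hx
        rw [Set.uIoc_of_le hyI'.2] at hx
        rw [norm_mul, norm_exp_neg_I_mul, one_mul]
        have hdx1 : dist x 1 < δ₁ := by
          rw [Real.dist_eq, abs_of_nonpos (by linarith [hx.2] : x - 1 ≤ 0)]
          have : 1 - x < 1 - y := by linarith [hx.1]
          linarith [lt_of_lt_of_le h1yδ hδle1]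
        have := hδ₁ hdx1
        rw [dist_eq_norm] at this
        simp only [hccdef]
        linarith
      have hT2 : ‖∫ x in y..1, Complex.exp (-Complex.I * (phase x α : ℂ))‖
          ≤ (C+1) * (1-y)^3 := by
        rw [← intervalIntegral.integral_add_adjacent_intervals
          (intervalIntegrable_e α y b') (intervalIntegrable_e α b' 1)]
        have hosc := osc_bound hm hmα hαM hyI'.1 hys hyb' hb'1
        rw [← hCdef] at hosc
        have htail : ‖∫ x in b'..1, Complex.exp (-Complex.I * (phase x α : ℂ))‖
            ≤ 1 * |1 - b'| := by
          apply intervalIntegral.norm_integral_le_of_norm_le_const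
          intro x _
          exact le_of_eq (norm_exp_neg_I_mul _)
        have habsb' : |1 - b'| = (1-y)^3 := by
          simp only [hb'def]
          rw [show (1:ℝ) - (1 - (1-y)^3) = (1-y)^3 by ring]
          exact _root_.abs_of_nonneg h3pos.le
        rw [habsb', one_mul] at htail
        calc ‖(∫ x in y..b', Complex.exp (-Complex.I * (phase x α : ℂ)))
              + ∫ x in b'..1, Complex.exp (-Complex.I * (phase x α : ℂ))‖
            ≤ ‖∫ x in y..b', Complex.exp (-Complex.I * (phase x α : ℂ))‖
              + ‖∫ x in b'..1, Complex.exp (-Complex.I * (phase x α : ℂ))‖ := norm_add_le _ _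
          _ ≤ C * (1-y)^3 + (1-y)^3 := add_le_add hosc htail
          _ = (C+1) * (1-y)^3 := by ring
      have hnorm : ‖Ψ (y,α)‖
          = 1/(1-y) * ‖∫ x in y..1, Complex.exp (-Complex.I * (phase x α : ℂ)) * f' x‖ := by
        simp only [hΨdef]
        rw [norm_mul, norm_div, norm_exp_I_mul]
        have hcast : (1:ℂ) - (y:ℂ) = ((1 - y : ℝ) : ℂ) := by push_cast; ring
        rw [hcast, Complex.norm_real, Real.norm_eq_abs, _root_.abs_of_pos h1y]
      rw [hnorm]
      have hIntBound : ‖∫ x in y..1, Complex.exp (-Complex.I * (phase x α : ℂ)) * f' x‖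
          ≤ ε/2*(1-y) + B*(C+1)*(1-y)^3 := by
        rw [hsplit]
        have habs1y : |1 - y| = 1 - y := _root_.abs_of_pos h1y
        calc ‖(∫ x in y..1, Complex.exp (-Complex.I * (phase x α : ℂ)) * (f' x - cc))
              + (∫ x in y..1, Complex.exp (-Complex.I * (phase x α : ℂ))) * cc‖
            ≤ ‖∫ x in y..1, Complex.exp (-Complex.I * (phase x α : ℂ)) * (f' x - cc)‖
              + ‖(∫ x in y..1, Complex.exp (-Complex.I * (phase x α : ℂ))) * cc‖ :=
              norm_add_le _ _
          _ ≤ ε/2 * (1-y) + ((C+1) * (1-y)^3) * B := by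
              apply add_le_add
              · rw [← habs1y]; exact hT1
              · rw [norm_mul]
                apply mul_le_mul hT2 (by simpa only [hccdef] using hB' 1)
                  (norm_nonneg _) (by positivity)
          _ = ε/2*(1-y) + B*(C+1)*(1-y)^3 := by ring
      calc 1/(1-y) * ‖∫ x in y..1, Complex.exp (-Complex.I * (phase x α : ℂ)) * f' x‖
          ≤ 1/(1-y) * (ε/2*(1-y) + B*(C+1)*(1-y)^3) := by
            apply mul_le_mul_of_nonneg_left hIntBound (by positivity)
        _ = ε/2 + B*(C+1)*(1-y)^2 := by field_simp
        _ < ε := by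
            have h1yδ₂ : 1 - y < δ₂ := lt_of_lt_of_le h1yδ hδle2
            have h2y : (1-y)^2 < δ₂^2 := by nlinarith
            have hQmul : Q * (1-y)^2 ≤ Q * δ₂^2 := mul_le_mul_of_nonneg_left h2y.le hQ0
            rw [hδ₂sq] at hQmul
            have hfin : Q * (ε/(2*(Q+1))) < ε/2 := by
              have hQ1 : (0:ℝ) < Q + 1 := by linarith
              rw [show Q * (ε/(2*(Q+1))) = (Q * ε)/(2*(Q+1)) by ring,
                div_lt_div_iff₀ (by positivity) (by norm_num : (0:ℝ) < 2)]
              nlinarith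
            simp only [hQdef] at hQmul hfin
            linarith
    · -- interior case y₀ < 1
      apply ContinuousAt.continuousWithinAt
      set b : ℝ := (y₀ + 1)/2 with hbdef
      have hyb : y₀ < b := by simp only [hbdef]; linarith
      have hb1 : b < 1 := by simp only [hbdef]; linarith
      set r : ℝ := |α₀|/2 with hrdef
      have hr0 : 0 < r := by
        simp only [hrdef]
        have := abs_pos.mpr hα₀
        linarith
      set pin : ℝ → ℝ := fun β => α₀ + max (-r) (min r (β - α₀)) with hpindef
      have hpin_cont : Continuous pin := by fun_prop
      have hpin_near : ∀ β, |pin β - α₀| ≤ r := by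
        intro β
        simp only [hpindef, add_sub_cancel_left]
        rw [abs_le]
        exact ⟨le_max_left _ _, max_le (by linarith) (min_le_left _ _)⟩
      have hpin_ne : ∀ β, pin β ≠ 0 := by
        intro β h
        have h1 := hpin_near β
        rw [h, zero_sub, abs_neg] at h1
        simp only [hrdef] at h1
        have := abs_pos.mpr hα₀
        linarith
      have hpin_eq : ∀ β, |β - α₀| ≤ r → pin β = β := by
        intro β hβ
        rw [abs_le] at hβ
        simp only [hpindef]
        rw [min_eq_right hβ.2, max_eq_right hβ.1]
        ring
      -- continuity of phase composed with clamps
      have hphase_clamp : Continuous fun q : ℝ × ℝ => phase (min q.1 b) (pin q.2) := by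
        rw [continuous_iff_continuousAt]
        intro q
        have hne : min q.1 b ≠ 1 := ne_of_lt (lt_of_le_of_lt (min_le_right _ _) hb1)
        have hinner : ContinuousAt (fun q : ℝ × ℝ => ((min q.1 b, pin q.2) : ℝ × ℝ)) q := by
          fun_prop
        exact ContinuousAt.comp (x := q) (f := fun q : ℝ × ℝ => ((min q.1 b, pin q.2) : ℝ × ℝ))
          (continuousAt_phase hne (hpin_ne q.2)) hinner
      -- tail integral
      set h2 : ℝ → ℂ := fun β => ∫ x in Set.Ioc b 1,
        Complex.exp (-Complex.I * (phase x (pin β) : ℂ)) * f' x with hh2def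
      have hh2 : Continuous h2 := by
        apply MeasureTheory.continuous_of_dominated (bound := fun _ => B)
        · intro β
          exact (measurable_e_mul hmf').aestronglyMeasurable
        · intro β
          filter_upwards with x
          rw [norm_mul, norm_exp_neg_I_mul, one_mul]
          exact hB' x
        · exact MeasureTheory.integrableOn_const measure_Ioc_lt_top.ne
        · filter_upwards with x
          by_cases hx1 : x = 1
          · subst hx1
            simp only [phase_one]
            fun_prop
          · apply Continuous.mul _ continuous_const
            apply Complex.continuous_exp.comp
            apply Continuous.mul continuous_const
            apply Complex.continuous_ofReal.comp
            rw [continuous_iff_continuousAt]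
            intro β
            have hinner : ContinuousAt (fun β : ℝ => ((x, pin β) : ℝ × ℝ)) β := by fun_prop
            exact ContinuousAt.comp (x := β) (f := fun β : ℝ => ((x, pin β) : ℝ × ℝ))
              (continuousAt_phase hx1 (hpin_ne β)) hinner
      -- parametric front integral
      set F2 : ℝ × ℝ → ℝ → ℂ := fun p t =>
        Complex.exp (-Complex.I * (phase (min t b) (pin p.2) : ℂ)) * f' t with hF2def
      have hF2 : Continuous (Function.uncurry F2) := by
        apply Continuous.mul
        · apply Complex.continuous_exp.comp
          apply Continuous.mul continuous_const
          apply Complex.continuous_ofReal.comp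
          exact hphase_clamp.comp (by fun_prop :
            Continuous fun q : (ℝ × ℝ) × ℝ => ((q.2, q.1.2) : ℝ × ℝ))
        · exact hf'cont.comp continuous_snd
      have hpar : Continuous fun p : ℝ × ℝ => ∫ t in b..(min p.1 b), F2 p t :=
        intervalIntegral.continuous_parametric_intervalIntegral_of_continuous hF2 (by fun_prop)
      -- assembled function
      set Ψ' : ℝ × ℝ → ℂ := fun p =>
        Complex.exp (Complex.I * (phase (min p.1 b) (pin p.2) : ℂ)) / (1 - ((min p.1 b : ℝ) : ℂ)) *
          ((-(∫ t in b..(min p.1 b), F2 p t)) + h2 p.2) with hΨ'def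
      have hΨ'cont : Continuous Ψ' := by
        apply Continuous.mul
        · apply Continuous.div
          · exact Complex.continuous_exp.comp
              (continuous_const.mul (Complex.continuous_ofReal.comp hphase_clamp))
          · fun_prop
          · intro p
            intro h
            rw [sub_eq_zero] at h
            have : ((min p.1 b : ℝ) : ℂ) = ((1 : ℝ) : ℂ) := by
              rw [← h]; norm_num
            have h2' : min p.1 b = 1 := Complex.ofReal_injective this
            have : min p.1 b < 1 := lt_of_le_of_lt (min_le_right _ _) hb1
            linarith
        · exact (hpar.neg).add (hh2.comp continuous_snd)
      -- Ψ agrees with Ψ' near (y₀, α₀)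
      set N : Set (ℝ × ℝ) := {p : ℝ × ℝ | p.1 < b ∧ |p.2 - α₀| < r} with hNdef
      have hNopen : IsOpen N := by
        apply IsOpen.inter
        · exact isOpen_lt continuous_fst continuous_const
        · have : Continuous fun p : ℝ × ℝ => |p.2 - α₀| := by fun_prop
          exact isOpen_lt this continuous_const
      have hmemN : (y₀, α₀) ∈ N := by
        constructor
        · exact hyb
        · simpa using hr0
      have heqN : ∀ p ∈ N, Ψ p = Ψ' p := by
        rintro ⟨y, β⟩ ⟨hyb', hβ⟩
        have hpinβ : pin β = β := hpin_eq β (le_of_lt hβ)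
        have hminy : min y b = y := min_eq_left (le_of_lt hyb')
        have hi1 : IntervalIntegrable
            (fun x => Complex.exp (-Complex.I * (phase x β : ℂ)) * f' x)
            MeasureTheory.volume y b := intervalIntegrable_e_mul hmf' hB'
        have hi2 : IntervalIntegrable
            (fun x => Complex.exp (-Complex.I * (phase x β : ℂ)) * f' x)
            MeasureTheory.volume b 1 := intervalIntegrable_e_mul hmf' hB'
        simp only [hΨdef, hΨ'def, hminy, hpinβ]
        congr 1
        rw [← intervalIntegral.integral_add_adjacent_intervals hi1 hi2]
        congr 1
        · rw [← intervalIntegral.integral_symm]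
          apply intervalIntegral.integral_congr
          intro t ht
          rw [Set.uIcc_of_le (le_of_lt hyb')] at ht
          simp only [hF2def, hpinβ, min_eq_left ht.2]
        · rw [intervalIntegral.integral_of_le (le_of_lt hb1)]
          simp only [hh2def, hpinβ]
      have hev : Ψ' =ᶠ[nhds (y₀, α₀)] Ψ := by
        filter_upwards [hNopen.mem_nhds hmemN] with p hp
        exact (heqN p hp).symm
      exact (hΨ'cont.continuousAt).congr hev
  · -- formula on Ico
    intro y hy α hα
    simp only [hΨdef]
    congr 1
    apply intervalIntegral.integral_congr
    intro x hx
    rw [Set.uIcc_of_le (le_of_lt hy.2)] at hx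
    dsimp only
    rw [hf'eq x ⟨le_trans hy.1 hx.1, hx.2⟩]
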